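/- Let A be a square matrix over a commutative ring, x a column vector and yᵗ a row vector. Then det(A + x·yᵗ) = det A + yᵗ · adj(A) · x, where adj(A) is the adjugate (classical adjoint) matrix of A. -/

import Mathlib

open Matrix Finset

theorem det_rank_one_perturbation {n : ℕ} {R : Type*} [CommRing R]
    (A : Matrix (Fin n) (Fin n) R) (x y : Fin n → R) :
    Matrix.det (A + Matrix.of fun i j => x i * y j) =
      Matrix.det A + ∑ i, ∑ j, y i * Matrix.adjugate A i j * x j := by
  classical
  set f := (Matrix.detRowAlternating : (Fin n → R) [⋀^Fin n]→ₗ[R] R) with hf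
  set m : Fin n → Fin n → R := fun i => x i • y with hm
  have h0 : Matrix.det (A + Matrix.of fun i j => x i * y j)
      = f (m + fun i => A i) := by
    show f _ = f _
    congr 1
    ext i j
    simp [hm, Matrix.add_apply, mul_comm, add_comm]
  have hexp : f (m + fun i => A i) = ∑ s : Finset (Fin n), f (s.piecewise m A) :=
    f.toMultilinearMap.map_add_univ m (fun i => A i)
  have hzero : ∀ s : Finset (Fin n), 2 ≤ s.card → f (s.piecewise m A) = 0 := by
    intro s hs
    obtain ⟨i, j, hij, hi, hj⟩ : ∃ i j, i ≠ j ∧ i ∈ s ∧ j ∈ s := by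
      obtain ⟨i, hi⟩ := Finset.card_pos.mp (show 0 < s.card by omega)
      obtain ⟨j, hj, hij⟩ := Finset.exists_mem_ne (show 1 < s.card by omega) i
      exact ⟨i, j, fun h => hij h.symm, hi, hj⟩
    have hvi : s.piecewise m A = Function.update (s.piecewise m A) i (x i • y) := by
      rw [eq_comm, Function.update_eq_self_iff, Finset.piecewise_eq_of_mem (f := m) (g := A) _ hi]
    have hvj : Function.update (s.piecewise m A) i y
        = Function.update (Function.update (s.piecewise m A) i y) j (x j • y) := by
      rw [eq_comm, Function.update_eq_self_iff, Function.update_of_ne hij.symm,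
        Finset.piecewise_eq_of_mem (f := m) (g := A) _ hj]
    rw [hvi, f.map_update_smul, hvj, f.map_update_smul,
      f.map_eq_zero_of_eq _ (i := i) (j := j) ?_ hij, smul_zero, smul_zero]
    rw [Function.update_of_ne hij, Function.update_self, Function.update_self]
  have hside : ∀ s ∈ (Finset.univ : Finset (Finset (Fin n))),
      s ∉ insert ∅ (Finset.univ.image (fun i : Fin n => ({i} : Finset (Fin n)))) →
      f (s.piecewise m A) = 0 := by
    intro s _ hs
    refine hzero s ?_
    simp only [Finset.mem_insert, Finset.mem_image, Finset.mem_univ, true_and] at hs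
    push_neg at hs
    obtain ⟨h1, h2⟩ := hs
    rcases Nat.lt_or_ge s.card 2 with h | h
    · interval_cases h' : s.card
      · exact absurd (Finset.card_eq_zero.mp h') h1.ne_empty
      · obtain ⟨i, rfl⟩ := Finset.card_eq_one.mp h'
        exact absurd rfl (h2 i)
    · exact h
  have hsum : ∑ s : Finset (Fin n), f (s.piecewise m A)
      = Matrix.det A + ∑ i, x i * Matrix.det (A.updateRow i y) := by
    rw [← Finset.sum_subset (Finset.subset_univ
      (insert ∅ (Finset.univ.image (fun i : Fin n => ({i} : Finset (Fin n)))))) hside]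
    rw [Finset.sum_insert (by simp), Finset.sum_image (by simpa using Finset.singleton_injective)]
    have he : f ((∅ : Finset (Fin n)).piecewise m A) = Matrix.det A := by
      rw [Finset.piecewise_empty m A]
      rfl
    rw [he]
    congr 1
    refine Finset.sum_congr rfl fun i _ => ?_
    rw [Finset.piecewise_singleton m A]
    have h1 : Function.update (A : Fin n → Fin n → R) i (m i)
        = Function.update (A : Fin n → Fin n → R) i (x i • y) := rfl
    rw [h1, f.map_update_smul (A : Fin n → Fin n → R) i (x i) y, smul_eq_mul]
    congr 1
  have hrow : ∀ i, Matrix.det (A.updateRow i y) = ∑ k, Matrix.adjugate A k i * y k := by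
    intro i
    rw [← Matrix.cramer_transpose_apply, Matrix.cramer_eq_adjugate_mulVec,
      ← Matrix.adjugate_transpose]
    simp [Matrix.mulVec, dotProduct, Matrix.transpose_apply]
  rw [h0, hexp, hsum]
  congr 1
  rw [Finset.sum_comm]
  refine Finset.sum_congr rfl fun i _ => ?_
  rw [hrow, Finset.mul_sum, Finset.sum_congr rfl fun k _ => ?_]
  ring
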